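/- Let m ≥ 1, r > 0, α ≥ 1, and let κ : ℝ^m → ℝ be Lipschitz with Lipschitz constant Lip(κ) and satisfy 1/α ≤ κ(x) ≤ α for all x. Then for every continuously differentiable, compactly supported f : ℝ^m → ℝ: ∬_{|x−y|<r} |f(x) − f(y)|² √(κ(x)κ(y)) dx dy ≤ (1 + Lip(κ) α r) · (ν_m r^{m+2}/(m+2)) · ∫_{ℝ^m} κ(x) |∇f(x)|² dx, where all integrals are with respect to Lebesgue measure on ℝ^m. -/

import Mathlib

open MeasureTheory Metric Set
open scoped RealInnerProductSpace ENNReal NNReal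

/-- The Lebesgue volume of the unit ball in `ℝ^m`. -/
noncomputable def unitBallVol (m : ℕ) : ℝ :=
  (volume (Metric.ball (0 : EuclideanSpace ℝ (Fin m)) 1)).toReal

section Aux
variable {m : ℕ}
local notation "𝔼" => EuclideanSpace ℝ (Fin m)



lemma integrableOn_ball_of_continuous {φ : 𝔼 → ℝ} (hφ : Continuous φ) (x : 𝔼) (s : ℝ) :
    IntegrableOn φ (Metric.ball x s) :=
  (hφ.continuousOn.integrableOn_compact (isCompact_closedBall x s)).mono_set
    Metric.ball_subset_closedBall

lemma sq_setIntegral_Ioc_le {h : ℝ → ℝ} (hc : Continuous h) :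
    (∫ t in Set.Ioc (0:ℝ) 1, h t) ^ 2 ≤ ∫ t in Set.Ioc (0:ℝ) 1, h t ^ 2 := by
  set μ : Measure ℝ := volume.restrict (Set.Ioc (0:ℝ) 1) with hμ
  haveI : IsProbabilityMeasure μ := ⟨by simp [hμ, Real.volume_Ioc]⟩
  obtain ⟨C, hC⟩ := (isCompact_Icc (a := (0:ℝ)) (b := 1)).exists_bound_of_continuousOn
    hc.continuousOn
  have hmem : MemLp h 2 μ := by
    refine MemLp.of_bound hc.aestronglyMeasurable C ?_
    rw [hμ]
    filter_upwards [ae_restrict_mem measurableSet_Ioc] with t ht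
    exact hC t (Set.Ioc_subset_Icc_self ht)
  have h0 := ProbabilityTheory.variance_nonneg h μ
  rw [ProbabilityTheory.variance_eq_sub hmem] at h0
  have : (∫ t, h t ∂μ) ^ 2 ≤ ∫ t, (h t) ^ 2 ∂μ := by
    have := sub_nonneg.mp h0
    simpa [Pi.pow_apply] using this
  simpa [hμ] using this



lemma ball_norm_sq (hm : 1 ≤ m) {r : ℝ} (hr : 0 < r) :
    ∫ z in Metric.ball (0 : 𝔼) r, ‖z‖ ^ 2
      = m * (unitBallVol m * r ^ (m + 2) / ((m : ℝ) + 2)) := by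
  haveI : Nonempty (Fin m) := ⟨⟨0, hm⟩⟩
  haveI : Nontrivial 𝔼 := inferInstanceAs (Nontrivial (PiLp 2 fun _ : Fin m => ℝ))
  have key := MeasureTheory.integral_fun_norm_addHaar (volume : Measure 𝔼)
    (Set.indicator (Set.Iio r) (fun s => s ^ 2))
  rw [finrank_euclideanSpace_fin] at key
  have h1 : (∫ x : 𝔼, Set.indicator (Set.Iio r) (fun s => s ^ 2) ‖x‖)
      = ∫ z in Metric.ball (0 : 𝔼) r, ‖z‖ ^ 2 := by
    rw [← integral_indicator measurableSet_ball]
    congr 1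
    ext x
    by_cases hx : x ∈ Metric.ball (0 : 𝔼) r
    · rw [Set.indicator_of_mem hx, Set.indicator_of_mem (by simpa [mem_ball_zero_iff] using hx)]
    · rw [Set.indicator_of_notMem hx,
        Set.indicator_of_notMem (by simpa [mem_ball_zero_iff] using hx)]
  have h2 : (∫ y in Set.Ioi (0:ℝ), y ^ (m - 1) • Set.indicator (Set.Iio r) (fun s => s ^ 2) y)
      = r ^ (m + 2) / ((m : ℝ) + 2) := by
    have : ∀ y : ℝ, y ^ (m-1) • Set.indicator (Set.Iio r) (fun s => s ^ 2) y
        = Set.indicator (Set.Iio r) (fun s => s ^ (m - 1) * s ^ 2) y := by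
      intro y
      by_cases hy : y ∈ Set.Iio r
      · rw [Set.indicator_of_mem hy, Set.indicator_of_mem hy, smul_eq_mul]
      · rw [Set.indicator_of_notMem hy, Set.indicator_of_notMem hy, smul_zero]
    simp_rw [this]
    rw [setIntegral_indicator measurableSet_Iio]
    have hIoo : Set.Ioi (0:ℝ) ∩ Set.Iio r = Set.Ioo 0 r := rfl
    rw [hIoo, ← integral_Ioc_eq_integral_Ioo, ← intervalIntegral.integral_of_le hr.le]
    have hcong : ∀ y ∈ Set.uIcc (0:ℝ) r, y ^ (m - 1) * y ^ 2 = y ^ (m + 1) := by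
      intro y _
      rw [← pow_add]
      congr 1
      omega
    rw [intervalIntegral.integral_congr hcong, integral_pow]
    norm_num [show m + 1 + 1 = m + 2 from rfl]
    ring
  rw [h1, h2] at key
  rw [key, nsmul_eq_mul, smul_eq_mul]
  rw [unitBallVol, measureReal_def]
  ring



lemma setIntegral_ball_comp_isometry (e : 𝔼 ≃ₗᵢ[ℝ] 𝔼) (φ : 𝔼 → ℝ) {r : ℝ} :
    ∫ z in Metric.ball (0:𝔼) r, φ (e z) = ∫ z in Metric.ball (0:𝔼) r, φ z := by
  have hpre : (⇑e) ⁻¹' (Metric.ball (0:𝔼) r) = Metric.ball (0:𝔼) r := by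
    ext z
    simp [mem_ball_zero_iff, e.norm_map]
  have h := (e.measurePreserving).setIntegral_preimage_emb
      (e.toHomeomorph.measurableEmbedding) φ (Metric.ball (0:𝔼) r)
  rw [hpre] at h
  exact h

lemma moment_swap (i j : Fin m) {r : ℝ} :
    ∫ z in Metric.ball (0:𝔼) r, (z i)^2 = ∫ z in Metric.ball (0:𝔼) r, (z j)^2 := by
  have h := setIntegral_ball_comp_isometry (m := m)
      (LinearIsometryEquiv.piLpCongrLeft 2 ℝ ℝ (Equiv.swap i j)) (fun z => (z i)^2) (r := r)
  have hco : ∀ z : 𝔼,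
      ((LinearIsometryEquiv.piLpCongrLeft 2 ℝ ℝ (Equiv.swap i j) z) i)^2 = (z j)^2 := by
    intro z
    simp [LinearIsometryEquiv.piLpCongrLeft_apply, Equiv.piCongrLeft'_apply,
      Equiv.piCongrLeft']
  rw [setIntegral_congr_fun measurableSet_ball (fun z _ => hco z)] at h
  exact h.symm

lemma moment_cross (i j : Fin m) (hij : i ≠ j) {r : ℝ} :
    ∫ z in Metric.ball (0:𝔼) r, z i * z j = 0 := by
  classical
  set e : 𝔼 ≃ₗᵢ[ℝ] 𝔼 := LinearIsometryEquiv.piLpCongrRight 2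
      (fun k : Fin m => if k = i then (LinearIsometryEquiv.neg ℝ : ℝ ≃ₗᵢ[ℝ] ℝ)
        else LinearIsometryEquiv.refl ℝ ℝ) with he
  have h := setIntegral_ball_comp_isometry (m := m) e (fun z => z i * z j) (r := r)
  have hco : ∀ z : 𝔼, (e z) i * (e z) j = -(z i * z j) := by
    intro z
    have h1 : (e z) i = -(z i) := by
      simp [he, LinearIsometryEquiv.piLpCongrRight_apply]
    have h2 : (e z) j = z j := by
      simp [he, LinearIsometryEquiv.piLpCongrRight_apply, hij.symm]
    rw [h1, h2]
    ring
  rw [setIntegral_congr_fun measurableSet_ball (fun z _ => hco z), integral_neg] at h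
  linarith


lemma continuous_coord (i : Fin m) : Continuous fun z : 𝔼 => z i :=
  (EuclideanSpace.proj i).continuous

lemma ball_inner_sq (hm : 1 ≤ m) {r : ℝ} (hr : 0 < r) (v : 𝔼) :
    ∫ z in Metric.ball (0:𝔼) r, (inner ℝ v z : ℝ) ^ 2
      = ‖v‖ ^ 2 * (unitBallVol m * r ^ (m + 2) / ((m : ℝ) + 2)) := by
  classical
  set c : ℝ := unitBallVol m * r ^ (m + 2) / ((m : ℝ) + 2) with hc
  have hint : ∀ i j : Fin m, IntegrableOn (fun z : 𝔼 => z i * z j) (Metric.ball (0:𝔼) r) :=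
    fun i j => integrableOn_ball_of_continuous ((continuous_coord i).mul (continuous_coord j)) _ _
  have hnormsq : ∀ z : 𝔼, ‖z‖ ^ 2 = ∑ i, (z i) ^ 2 := by
    intro z
    rw [EuclideanSpace.norm_eq, Real.sq_sqrt (by positivity)]
    simp [Real.norm_eq_abs, sq_abs]
  have hdiag : ∀ i : Fin m, ∫ z in Metric.ball (0:𝔼) r, (z i)^2 = c := by
    intro i
    have hsum : ∑ j : Fin m, ∫ z in Metric.ball (0:𝔼) r, (z j)^2
        = ∫ z in Metric.ball (0:𝔼) r, ‖z‖^2 := by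
      rw [← integral_finset_sum]
      · exact setIntegral_congr_fun measurableSet_ball (fun z _ => (hnormsq z).symm)
      · intro j _
        simpa [pow_two, IntegrableOn] using hint j j
    have hall : ∀ j : Fin m, ∫ z in Metric.ball (0:𝔼) r, (z j)^2
        = ∫ z in Metric.ball (0:𝔼) r, (z i)^2 := fun j => moment_swap j i
    rw [Finset.sum_congr rfl (fun j _ => hall j), Finset.sum_const, ball_norm_sq hm hr,
      Finset.card_univ, Fintype.card_fin, nsmul_eq_mul] at hsum
    have hm0 : (m : ℝ) ≠ 0 := Nat.cast_ne_zero.mpr (by omega)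
    rw [hc]
    exact mul_left_cancel₀ hm0 hsum
  have hinner : ∀ z : 𝔼, (inner ℝ v z : ℝ) = ∑ i, v i * z i := by
    intro z
    simp [PiLp.inner_apply, RCLike.inner_apply, conj_trivial]
    exact Finset.sum_congr rfl fun i _ => mul_comm _ _
  have hpt : ∀ z : 𝔼, (inner ℝ v z : ℝ)^2 = ∑ i, ∑ j, (v i * v j) * (z i * z j) := by
    intro z
    rw [hinner, pow_two, Finset.sum_mul_sum]
    exact Finset.sum_congr rfl fun i _ => Finset.sum_congr rfl fun j _ => by ring
  rw [setIntegral_congr_fun measurableSet_ball (fun z _ => hpt z)]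
  rw [integral_finset_sum _ (fun i _ => integrable_finset_sum _
    (fun j _ => ((hint i j).const_mul _)))]
  have : ∀ i : Fin m, ∫ z in Metric.ball (0:𝔼) r, (∑ j, (v i * v j) * (z i * z j))
      = (v i)^2 * c := by
    intro i
    rw [integral_finset_sum _ (fun j _ => ((hint i j).const_mul _))]
    have hterm : ∀ j : Fin m, ∫ z in Metric.ball (0:𝔼) r, (v i * v j) * (z i * z j)
        = if j = i then (v i)^2 * c else 0 := by
      intro j
      rw [integral_const_mul]
      by_cases hji : j = i
      · subst hji
        rw [if_pos rfl, show (fun z : 𝔼 => z j * z j) = fun z : 𝔼 => (z j)^2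
          from funext fun z => (pow_two (z j)).symm, hdiag j]
        ring
      · rw [moment_cross i j (fun h => hji h.symm), if_neg hji, mul_zero]
    rw [Finset.sum_congr rfl (fun j _ => hterm j), Finset.sum_ite_eq' Finset.univ i
      (fun _ => (v i)^2 * c)]
    simp
  rw [Finset.sum_congr rfl (fun i _ => this i), ← Finset.sum_mul]
  congr 1
  rw [← hnormsq v]

lemma weight_bound {α : ℝ} (hα : 1 ≤ α) {L : NNReal} {κ : 𝔼 → ℝ}
    (hκLip : LipschitzWith L κ) (hκlb : ∀ x, 1/α ≤ κ x)
    {r : ℝ} (hr : 0 ≤ r) {x y w : 𝔼} (hxw : dist x w ≤ r) (hyw : dist y w ≤ r) :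
    Real.sqrt (κ x * κ y) ≤ (1 + (L:ℝ) * α * r) * κ w := by
  have hα0 : (0:ℝ) < α := lt_of_lt_of_le one_pos hα
  have hw0 : 0 < κ w := lt_of_lt_of_le (by positivity) (hκlb w)
  have hαw : 1 ≤ α * κ w := by
    have h := hκlb w
    rw [div_le_iff₀ hα0] at h
    nlinarith
  have key : ∀ u : 𝔼, dist u w ≤ r → κ u ≤ (1 + (L:ℝ)*α*r) * κ w := by
    intro u hu
    have hdist := hκLip.dist_le_mul u w
    rw [Real.dist_eq] at hdist
    have h1 : κ u ≤ κ w + (L:ℝ) * r := by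
      have h2 : κ u - κ w ≤ |κ u - κ w| := le_abs_self _
      have h3 : (L:ℝ) * dist u w ≤ (L:ℝ) * r := mul_le_mul_of_nonneg_left hu L.coe_nonneg
      linarith
    have h3 : (L:ℝ) * r ≤ (L:ℝ) * r * (α * κ w) := by
      nlinarith [mul_nonneg (mul_nonneg L.coe_nonneg hr) (sub_nonneg.mpr hαw)]
    calc κ u ≤ κ w + (L:ℝ) * r := h1
      _ ≤ κ w + (L:ℝ) * r * (α * κ w) := by linarith
      _ = (1 + (L:ℝ)*α*r) * κ w := by ring
  have hx0 : (0:ℝ) ≤ κ x := le_trans (by positivity) (hκlb x)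
  have hy0 : (0:ℝ) ≤ κ y := le_trans (by positivity) (hκlb y)
  have hsq : κ x * κ y ≤ ((1 + (L:ℝ)*α*r) * κ w)^2 := by
    have hkx := key x hxw
    have hky := key y hyw
    nlinarith [L.coe_nonneg, hr]
  calc Real.sqrt (κ x * κ y) ≤ Real.sqrt (((1 + (L:ℝ)*α*r)*κ w)^2) := Real.sqrt_le_sqrt hsq
    _ = (1 + (L:ℝ)*α*r)*κ w := Real.sqrt_sq
        (mul_nonneg (by nlinarith [mul_nonneg (mul_nonneg L.coe_nonneg hα0.le) hr]) hw0.le)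

lemma setIntegral_ball_translate (φ : 𝔼 → ℝ) (x : 𝔼) (r : ℝ) :
    ∫ y in Metric.ball x r, φ y = ∫ z in Metric.ball (0:𝔼) r, φ (x + z) := by
  have hmp : MeasurePreserving (fun z : 𝔼 => x + z) volume volume :=
    measurePreserving_add_left volume x
  have hemb : MeasurableEmbedding (fun z : 𝔼 => x + z) :=
    (Homeomorph.addLeft x).measurableEmbedding
  have hpre : (fun z : 𝔼 => x + z) ⁻¹' (Metric.ball x r) = Metric.ball (0:𝔼) r := by
    ext z
    simp [Metric.mem_ball, dist_eq_norm, add_sub_cancel_left, sub_zero]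
  have h := hmp.setIntegral_preimage_emb hemb φ (Metric.ball x r)
  rw [hpre] at h
  exact h.symm

lemma inner_gradient_eq {f : 𝔼 → ℝ} (w v : 𝔼) :
    (inner ℝ (gradient f w) v : ℝ) = fderiv ℝ f w v := by
  rw [gradient]
  exact InnerProductSpace.toDual_symm_apply

lemma pointwise_bound {α : ℝ} (hα : 1 ≤ α) {L : NNReal} {κ : 𝔼 → ℝ}
    (hκLip : LipschitzWith L κ) (hκlb : ∀ x, 1/α ≤ κ x) {r : ℝ} (hr : 0 < r)
    {f : 𝔼 → ℝ} (hf : ContDiff ℝ 1 f)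
    {x y : 𝔼} (hy : y ∈ Metric.ball x r) :
    (f x - f y)^2 * Real.sqrt (κ x * κ y)
      ≤ (1 + (L:ℝ)*α*r) * ∫ t in Set.Ioc (0:ℝ) 1,
          κ (x + t • (y - x)) * (inner ℝ (gradient f (x + t • (y - x))) (y - x) : ℝ)^2 := by
  set v : 𝔼 := y - x with hv
  set h : ℝ → ℝ := fun t => fderiv ℝ f (x + t • v) v with hh
  have hcv : Continuous fun t : ℝ => x + t • v :=
    continuous_const.add (continuous_id.smul continuous_const)
  have hcont : Continuous h := by
    apply Continuous.clm_apply
    · exact (hf.continuous_fderiv one_ne_zero).comp hcv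
    · exact continuous_const
  have hκc : Continuous κ := hκLip.continuous
  have hderiv : ∀ t : ℝ, HasDerivAt (fun s => f (x + s • v)) (h t) t := by
    intro t
    have h1 : HasDerivAt (fun s : ℝ => x + s • v) v t := by
      simpa using ((hasDerivAt_id t).smul_const v).const_add x
    exact ((hf.differentiable one_ne_zero) (x + t • v)).hasFDerivAt.comp_hasDerivAt t h1
  have hFTC : ∫ t in Set.Ioc (0:ℝ) 1, h t = f y - f x := by
    rw [← intervalIntegral.integral_of_le zero_le_one]
    rw [intervalIntegral.integral_eq_sub_of_hasDerivAt (fun t _ => hderiv t)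
      (hcont.intervalIntegrable 0 1)]
    simp [hv]
  -- rewrite target integrand
  have hinteg : ∀ t : ℝ, κ (x + t • (y - x)) * (inner ℝ (gradient f (x + t • (y - x))) (y - x) : ℝ)^2
      = κ (x + t • v) * (h t)^2 := by
    intro t
    rw [← hv, inner_gradient_eq]
  rw [show (∫ t in Set.Ioc (0:ℝ) 1, κ (x + t • v) * (inner ℝ (gradient f (x + t • v)) v : ℝ)^2) = ∫ t in Set.Ioc (0:ℝ) 1, κ (x + t • v) * (h t)^2 from setIntegral_congr_fun measurableSet_Ioc (fun t _ => hinteg t)]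
  have hsqrt0 : 0 ≤ Real.sqrt (κ x * κ y) := Real.sqrt_nonneg _
  have hCS : (f x - f y)^2 ≤ ∫ t in Set.Ioc (0:ℝ) 1, (h t)^2 := by
    have h1 : (f x - f y)^2 = (∫ t in Set.Ioc (0:ℝ) 1, h t)^2 := by
      rw [hFTC]; ring
    rw [h1]
    exact sq_setIntegral_Ioc_le hcont
  have hnv : ‖v‖ ≤ r := by
    rw [hv, ← dist_eq_norm]
    exact (Metric.mem_ball.mp hy).le
  have hweight : ∀ t ∈ Set.Ioc (0:ℝ) 1,
      (h t)^2 * Real.sqrt (κ x * κ y) ≤ (1 + (L:ℝ)*α*r) * (κ (x + t • v) * (h t)^2) := by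
    intro t ht
    have ht0 : 0 ≤ t := ht.1.le
    have ht1 : t ≤ 1 := ht.2
    have hxw : dist x (x + t • v) ≤ r := by
      rw [dist_eq_norm]
      have : x - (x + t • v) = -(t • v) := by abel
      rw [this, norm_neg, norm_smul, Real.norm_eq_abs, abs_of_nonneg ht0]
      calc t * ‖v‖ ≤ 1 * ‖v‖ := by
            apply mul_le_mul_of_nonneg_right ht1 (norm_nonneg v)
        _ = ‖v‖ := one_mul _
        _ ≤ r := hnv
    have hyw : dist y (x + t • v) ≤ r := by
      rw [dist_eq_norm]
      have : y - (x + t • v) = (1 - t) • v := by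
        rw [sub_smul, one_smul, hv]; abel
      rw [this, norm_smul, Real.norm_eq_abs, abs_of_nonneg (by linarith)]
      calc (1 - t) * ‖v‖ ≤ 1 * ‖v‖ := by
            apply mul_le_mul_of_nonneg_right (by linarith) (norm_nonneg v)
        _ = ‖v‖ := one_mul _
        _ ≤ r := hnv
    have hw := weight_bound (m := m) hα hκLip hκlb hr.le hxw hyw
    calc (h t)^2 * Real.sqrt (κ x * κ y) ≤ (h t)^2 * ((1 + (L:ℝ)*α*r) * κ (x + t • v)) :=
          mul_le_mul_of_nonneg_left hw (sq_nonneg _)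
      _ = (1 + (L:ℝ)*α*r) * (κ (x + t • v) * (h t)^2) := by ring
  calc (f x - f y)^2 * Real.sqrt (κ x * κ y)
      ≤ (∫ t in Set.Ioc (0:ℝ) 1, (h t)^2) * Real.sqrt (κ x * κ y) :=
        mul_le_mul_of_nonneg_right hCS hsqrt0
    _ = ∫ t in Set.Ioc (0:ℝ) 1, (h t)^2 * Real.sqrt (κ x * κ y) :=
        (integral_mul_const _ _).symm
    _ ≤ ∫ t in Set.Ioc (0:ℝ) 1, (1 + (L:ℝ)*α*r) * (κ (x + t • v) * (h t)^2) := by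
        apply setIntegral_mono_on
        · exact ((hcont.pow 2).mul continuous_const).integrableOn_Ioc
        · exact (continuous_const.mul ((hκc.comp hcv).mul (hcont.pow 2))).integrableOn_Ioc
        · exact measurableSet_Ioc
        · exact hweight
    _ = (1 + (L:ℝ)*α*r) * ∫ t in Set.Ioc (0:ℝ) 1, κ (x + t • v) * (h t)^2 :=
        integral_const_mul _ _

end Aux

theorem stmt_8 (m : ℕ) (hm : 1 ≤ m) (r : ℝ) (hr : 0 < r) (α : ℝ) (hα : 1 ≤ α)
    (κ : EuclideanSpace ℝ (Fin m) → ℝ) (L : NNReal) (hκLip : LipschitzWith L κ)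
    (hκlb : ∀ x, 1 / α ≤ κ x) (hκub : ∀ x, κ x ≤ α)
    (f : EuclideanSpace ℝ (Fin m) → ℝ) (hf : ContDiff ℝ 1 f)
    (hsupp : HasCompactSupport f) :
    ∫ x, ∫ y in Metric.ball x r, (f x - f y) ^ 2 * Real.sqrt (κ x * κ y)
      ≤ (1 + (L : ℝ) * α * r) * (unitBallVol m * r ^ (m + 2) / ((m : ℝ) + 2)) *
          ∫ x, κ x * ‖gradient f x‖ ^ 2 := by
  classical
  have hα0 : (0:ℝ) < α := lt_of_lt_of_le one_pos hα
  set c : ℝ := unitBallVol m * r ^ (m + 2) / ((m : ℝ) + 2) with hcdef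
  have hc0 : 0 ≤ c :=
    div_nonneg (mul_nonneg ENNReal.toReal_nonneg (pow_nonneg hr.le _)) (by positivity)
  set CL : ℝ := 1 + (L:ℝ) * α * r with hCLdef
  have hCL0 : (0:ℝ) ≤ CL := by
    have := mul_nonneg (mul_nonneg L.coe_nonneg hα0.le) hr.le
    rw [hCLdef]; linarith
  set G : EuclideanSpace ℝ (Fin m) → EuclideanSpace ℝ (Fin m) := gradient f with hGdef
  have hGc : Continuous G := by
    rw [hGdef]
    unfold gradient
    exact (InnerProductSpace.toDual ℝ _).symm.continuous.comp (hf.continuous_fderiv one_ne_zero)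
  have hGsupp : HasCompactSupport G := by
    rw [hGdef]
    unfold gradient
    exact (hsupp.fderiv (𝕜 := ℝ)).comp_left (map_zero _)
  obtain ⟨C, hC⟩ := hGsupp.exists_bound_of_continuous hGc
  have hC0 : 0 ≤ C := le_trans (norm_nonneg _) (hC 0)
  have hκc : Continuous κ := hκLip.continuous
  have hκ0 : ∀ w, 0 < κ w := fun w => lt_of_lt_of_le (by positivity) (hκlb w)
  set g : EuclideanSpace ℝ (Fin m) → ℝ := fun w => κ w * ‖G w‖^2 with hgdef
  have hgc : Continuous g := hκc.mul ((hGc.norm).pow 2)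
  have hgsupp : HasCompactSupport g := by
    have h1 : HasCompactSupport (fun w => ‖G w‖^2) :=
      hGsupp.comp_left (g := fun v : EuclideanSpace ℝ (Fin m) => ‖v‖^2) (by simp)
    exact h1.mul_left
  have hgint : Integrable g := hgc.integrable_of_hasCompactSupport hgsupp
  have hgnn : ∀ w, 0 ≤ g w := fun w => mul_nonneg (hκ0 w).le (by positivity)
  -- the basic integrand
  set ρ : EuclideanSpace ℝ (Fin m) → EuclideanSpace ℝ (Fin m) → ℝ → ℝ :=
    fun x z t => κ (x + t • z) * (inner ℝ (G (x + t • z)) z : ℝ)^2 with hρdef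
  have hwc : Continuous (fun p : (EuclideanSpace ℝ (Fin m) × EuclideanSpace ℝ (Fin m)) × ℝ =>
      p.1.1 + p.2 • p.1.2) :=
    (continuous_fst.comp continuous_fst).add
      (continuous_snd.smul (continuous_snd.comp continuous_fst))
  have hρc : Continuous (fun p : (EuclideanSpace ℝ (Fin m) × EuclideanSpace ℝ (Fin m)) × ℝ =>
      ρ p.1.1 p.1.2 p.2) := by
    apply Continuous.mul (hκc.comp hwc)
    exact (Continuous.inner (hGc.comp hwc) (continuous_snd.comp continuous_fst)).pow 2
  have hρnn : ∀ x z t, 0 ≤ ρ x z t := fun x z t => mul_nonneg (hκ0 _).le (sq_nonneg _)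
  set B : ℝ := α * (C * r)^2 with hBdef
  have hρbd : ∀ x z t, z ∈ Metric.ball (0 : EuclideanSpace ℝ (Fin m)) r → |ρ x z t| ≤ B := by
    intro x z t hz
    rw [abs_of_nonneg (hρnn x z t), hρdef, hBdef]
    have h1 : (inner ℝ (G (x + t • z)) z : ℝ)^2 ≤ (C * r)^2 := by
      have h2 : |(inner ℝ (G (x + t • z)) z : ℝ)| ≤ C * r := by
        refine le_trans (abs_real_inner_le_norm _ _) ?_
        exact mul_le_mul (hC _) (mem_ball_zero_iff.mp hz).le (norm_nonneg _) hC0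
      calc (inner ℝ (G (x + t • z)) z : ℝ)^2 = |(inner ℝ (G (x + t • z)) z : ℝ)|^2 := (sq_abs _).symm
        _ ≤ (C * r)^2 := by
          apply pow_le_pow_left₀ (abs_nonneg _) h2
    exact mul_le_mul (hκub _) h1 (sq_nonneg _) hα0.le
  set S : EuclideanSpace ℝ (Fin m) → EuclideanSpace ℝ (Fin m) → ℝ :=
    fun x z => ∫ t in (0:ℝ)..1, ρ x z t with hSdef
  have hScont : Continuous (fun p : EuclideanSpace ℝ (Fin m) × EuclideanSpace ℝ (Fin m) =>
      S p.1 p.2) :=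
    intervalIntegral.continuous_parametric_intervalIntegral_of_continuous'
      (f := fun (p : EuclideanSpace ℝ (Fin m) × EuclideanSpace ℝ (Fin m)) t => ρ p.1 p.2 t)
      (μ := volume) hρc 0 1
  have hSIoc : ∀ x z, S x z = ∫ t in Set.Ioc (0:ℝ) 1, ρ x z t := fun x z =>
    intervalIntegral.integral_of_le zero_le_one
  have hSnn : ∀ x z, 0 ≤ S x z := by
    intro x z
    rw [hSIoc]
    exact setIntegral_nonneg measurableSet_Ioc fun t _ => hρnn x z t
  have hSbd : ∀ x, ∀ z ∈ Metric.ball (0 : EuclideanSpace ℝ (Fin m)) r, |S x z| ≤ B := by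
    intro x z hz
    have h := intervalIntegral.norm_integral_le_of_norm_le_const
      (f := fun t => ρ x z t) (a := 0) (b := 1) (C := B)
      (fun t _ => by rw [Real.norm_eq_abs]; exact hρbd x z t hz)
    simpa [Real.norm_eq_abs] using h
  set Q : EuclideanSpace ℝ (Fin m) → ℝ :=
    fun x => ∫ z in Metric.ball (0 : EuclideanSpace ℝ (Fin m)) r, S x z with hQdef
  have hSxz_cont : ∀ x, Continuous fun z => S x z := fun x =>
    hScont.comp (continuous_const.prodMk continuous_id)
  have hSxz_int : ∀ x, IntegrableOn (fun z => S x z)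
      (Metric.ball (0 : EuclideanSpace ℝ (Fin m)) r) := fun x =>
    integrableOn_ball_of_continuous (hSxz_cont x) _ _
  have hQc : Continuous Q := by
    rw [hQdef]
    apply continuous_of_dominated (bound := fun _ => B)
    · exact fun x => (hSxz_cont x).aestronglyMeasurable
    · intro x
      rw [ae_restrict_iff' measurableSet_ball]
      exact ae_of_all _ fun z hz => by
        rw [Real.norm_eq_abs]; exact hSbd x z hz
    · exact (integrableOn_const_iff).mpr (Or.inr measure_ball_lt_top)
    · exact ae_of_all _ fun z => hScont.comp (continuous_id.prodMk continuous_const)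
  have hQnn : ∀ x, 0 ≤ Q x := fun x =>
    setIntegral_nonneg measurableSet_ball fun z _ => hSnn x z
  -- compact support of Q
  have hQsupp : HasCompactSupport Q := by
    apply HasCompactSupport.intro (IsCompact.cthickening (r := r) hGsupp)
    intro x hx
    rw [hQdef]
    apply setIntegral_eq_zero_of_forall_eq_zero
    intro z hz
    rw [hSIoc]
    apply setIntegral_eq_zero_of_forall_eq_zero
    intro t ht
    have hG0 : G (x + t • z) = 0 := by
      by_contra h0
      apply hx
      apply Metric.mem_cthickening_of_dist_le x (x + t • z) r (tsupport G)
        (subset_tsupport G h0)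
      rw [dist_eq_norm]
      have : x - (x + t • z) = -(t • z) := by abel
      rw [this, norm_neg, norm_smul, Real.norm_eq_abs, abs_of_nonneg ht.1.le]
      calc t * ‖z‖ ≤ 1 * ‖z‖ := mul_le_mul_of_nonneg_right ht.2 (norm_nonneg _)
        _ = ‖z‖ := one_mul _
        _ ≤ r := (mem_ball_zero_iff.mp hz).le
    rw [hρdef]
    simp only [hG0, inner_zero_left]
    ring
  have hQint : Integrable Q := hQc.integrable_of_hasCompactSupport hQsupp
  -- value of ∫ Q via Tonelli
  have hball_int_inner : ∀ w : EuclideanSpace ℝ (Fin m),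
      IntegrableOn (fun z => κ w * (inner ℝ (G w) z : ℝ)^2)
        (Metric.ball (0 : EuclideanSpace ℝ (Fin m)) r) := by
    intro w
    apply integrableOn_ball_of_continuous
    exact continuous_const.mul ((Continuous.inner continuous_const continuous_id).pow 2)
  have hρmeas : Measurable (fun p : (EuclideanSpace ℝ (Fin m) × EuclideanSpace ℝ (Fin m)) × ℝ =>
      ENNReal.ofReal (ρ p.1.1 p.1.2 p.2)) := hρc.measurable.ennreal_ofReal
  have hFmeas : Measurable (fun p : EuclideanSpace ℝ (Fin m) × EuclideanSpace ℝ (Fin m) =>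
      ∫⁻ t in Set.Ioc (0:ℝ) 1, ENNReal.ofReal (ρ p.1 p.2 t)) :=
    Measurable.lintegral_prod_right' (f := fun q :
      (EuclideanSpace ℝ (Fin m) × EuclideanSpace ℝ (Fin m)) × ℝ =>
        ENNReal.ofReal (ρ q.1.1 q.1.2 q.2)) hρmeas
  have key : ∫ x, Q x = (∫ w, g w) * c := by
    have h1 : ∫ x, Q x = (∫⁻ x, ENNReal.ofReal (Q x)).toReal :=
      integral_eq_lintegral_of_nonneg_ae (ae_of_all _ hQnn) hQc.aestronglyMeasurable
    have e1 : ∀ x : EuclideanSpace ℝ (Fin m), ENNReal.ofReal (Q x)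
        = ∫⁻ z in Metric.ball (0 : EuclideanSpace ℝ (Fin m)) r, ENNReal.ofReal (S x z) :=
      fun x => ofReal_integral_eq_lintegral_ofReal (hSxz_int x) (ae_of_all _ fun z => hSnn x z)
    have e2 : ∀ x z : EuclideanSpace ℝ (Fin m), ENNReal.ofReal (S x z)
        = ∫⁻ t in Set.Ioc (0:ℝ) 1, ENNReal.ofReal (ρ x z t) := by
      intro x z
      rw [hSIoc]
      refine ofReal_integral_eq_lintegral_ofReal ?_ (ae_of_all _ fun t => hρnn x z t)
      exact Continuous.integrableOn_Ioc
        (hρc.comp ((continuous_const.prodMk continuous_const).prodMk continuous_id))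
    have hswap2 : ∀ z : EuclideanSpace ℝ (Fin m),
        ∫⁻ x, ∫⁻ t in Set.Ioc (0:ℝ) 1, ENNReal.ofReal (ρ x z t)
        = ∫⁻ t in Set.Ioc (0:ℝ) 1, ∫⁻ x, ENNReal.ofReal (ρ x z t) := by
      intro z
      refine lintegral_lintegral_swap (Measurable.aemeasurable (Measurable.ennreal_ofReal ?_))
      exact (hρc.comp ((continuous_fst.prodMk continuous_const).prodMk
        continuous_snd)).measurable
    have htrans : ∀ (z : EuclideanSpace ℝ (Fin m)) (t : ℝ), ∫⁻ x, ENNReal.ofReal (ρ x z t)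
        = ∫⁻ w, ENNReal.ofReal (κ w * (inner ℝ (G w) z : ℝ)^2) := by
      intro z t
      have h := lintegral_add_right_eq_self (μ := (volume : Measure (EuclideanSpace ℝ (Fin m))))
        (fun w => ENNReal.ofReal (κ w * (inner ℝ (G w) z : ℝ)^2)) (t • z)
      rw [← h]
    have hmoment : ∀ w : EuclideanSpace ℝ (Fin m),
        ∫⁻ z in Metric.ball (0 : EuclideanSpace ℝ (Fin m)) r,
          ENNReal.ofReal (κ w * (inner ℝ (G w) z : ℝ)^2) = ENNReal.ofReal (g w * c) := by
      intro w
      rw [← ofReal_integral_eq_lintegral_ofReal (hball_int_inner w)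
        (ae_of_all _ fun z => mul_nonneg (hκ0 w).le (sq_nonneg _))]
      congr 1
      rw [integral_const_mul, ball_inner_sq hm hr (G w)]
      simp only [hgdef, hcdef]
      ring
    have hswap3 : ∫⁻ z in Metric.ball (0 : EuclideanSpace ℝ (Fin m)) r,
          ∫⁻ w, ENNReal.ofReal (κ w * (inner ℝ (G w) z : ℝ)^2)
        = ∫⁻ w, ∫⁻ z in Metric.ball (0 : EuclideanSpace ℝ (Fin m)) r,
          ENNReal.ofReal (κ w * (inner ℝ (G w) z : ℝ)^2) := by
      refine lintegral_lintegral_swap (Measurable.aemeasurable (Measurable.ennreal_ofReal ?_))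
      exact ((hκc.comp continuous_snd).mul
        ((Continuous.inner (hGc.comp continuous_snd) continuous_fst).pow 2)).measurable
    have hfin : ∫⁻ w, ENNReal.ofReal (g w * c) = ENNReal.ofReal ((∫ w, g w) * c) := by
      rw [← integral_mul_const]
      exact (ofReal_integral_eq_lintegral_ofReal (hgint.mul_const c)
        (ae_of_all _ fun w => mul_nonneg (hgnn w) hc0)).symm
    have h2 : ∫⁻ x, ENNReal.ofReal (Q x) = ENNReal.ofReal ((∫ w, g w) * c) := by
      calc ∫⁻ x, ENNReal.ofReal (Q x)
          = ∫⁻ x, ∫⁻ z in Metric.ball (0 : EuclideanSpace ℝ (Fin m)) r,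
              ∫⁻ t in Set.Ioc (0:ℝ) 1, ENNReal.ofReal (ρ x z t) := by
            refine lintegral_congr fun x => ?_
            rw [e1 x]
            exact lintegral_congr fun z => e2 x z
        _ = ∫⁻ z in Metric.ball (0 : EuclideanSpace ℝ (Fin m)) r,
              ∫⁻ x, ∫⁻ t in Set.Ioc (0:ℝ) 1, ENNReal.ofReal (ρ x z t) :=
            lintegral_lintegral_swap hFmeas.aemeasurable
        _ = ∫⁻ z in Metric.ball (0 : EuclideanSpace ℝ (Fin m)) r,
              ∫⁻ t in Set.Ioc (0:ℝ) 1, ∫⁻ x, ENNReal.ofReal (ρ x z t) :=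
            lintegral_congr fun z => hswap2 z
        _ = ∫⁻ z in Metric.ball (0 : EuclideanSpace ℝ (Fin m)) r,
              ∫⁻ t in Set.Ioc (0:ℝ) 1,
                ∫⁻ w, ENNReal.ofReal (κ w * (inner ℝ (G w) z : ℝ)^2) :=
            lintegral_congr fun z => lintegral_congr fun t => htrans z t
        _ = ∫⁻ z in Metric.ball (0 : EuclideanSpace ℝ (Fin m)) r,
              ∫⁻ w, ENNReal.ofReal (κ w * (inner ℝ (G w) z : ℝ)^2) := by
            refine lintegral_congr fun z => ?_
            rw [setLIntegral_const, Real.volume_Ioc]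
            norm_num
        _ = ∫⁻ w, ∫⁻ z in Metric.ball (0 : EuclideanSpace ℝ (Fin m)) r,
              ENNReal.ofReal (κ w * (inner ℝ (G w) z : ℝ)^2) := hswap3
        _ = ∫⁻ w, ENNReal.ofReal (g w * c) := lintegral_congr hmoment
        _ = ENNReal.ofReal ((∫ w, g w) * c) := hfin
    rw [h1, h2, ENNReal.toReal_ofReal (mul_nonneg (integral_nonneg hgnn) hc0)]
  -- pointwise comparison of the inner integrals
  have halmost : ∀ x, (∫ y in Metric.ball x r, (f x - f y)^2 * Real.sqrt (κ x * κ y))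
      ≤ CL * Q x := by
    intro x
    have hbound : ∀ y ∈ Metric.ball x r,
        (f x - f y)^2 * Real.sqrt (κ x * κ y) ≤ CL * S x (y - x) := by
      intro y hy
      have hpb := pointwise_bound (m := m) hα hκLip hκlb hr hf hy
      rw [hSIoc]
      exact hpb
    have hSint : IntegrableOn (fun y => CL * S x (y - x)) (Metric.ball x r) := by
      apply integrableOn_ball_of_continuous
      exact continuous_const.mul ((hSxz_cont x).comp (continuous_id.sub continuous_const))
    have hQx : ∫ y in Metric.ball x r, CL * S x (y - x) = CL * Q x := by
      rw [integral_const_mul]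
      congr 1
      rw [setIntegral_ball_translate (fun y => S x (y - x)) x r]
      simp only [add_sub_cancel_left]
      rfl
    calc ∫ y in Metric.ball x r, (f x - f y)^2 * Real.sqrt (κ x * κ y)
        ≤ ∫ y in Metric.ball x r, CL * S x (y - x) := by
          apply integral_mono_of_nonneg
          · exact ae_of_all _ fun y => mul_nonneg (sq_nonneg _) (Real.sqrt_nonneg _)
          · exact hSint
          · show ∀ᵐ y ∂(volume.restrict (Metric.ball x r)),
                (f x - f y)^2 * Real.sqrt (κ x * κ y) ≤ CL * S x (y - x)
            rw [ae_restrict_iff' measurableSet_ball]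
            exact ae_of_all _ hbound
      _ = CL * Q x := hQx
  have hgeq : ∫ w, g w = ∫ x, κ x * ‖G x‖^2 := rfl
  calc ∫ x, ∫ y in Metric.ball x r, (f x - f y)^2 * Real.sqrt (κ x * κ y)
      ≤ ∫ x, CL * Q x := by
        apply integral_mono_of_nonneg
        · exact ae_of_all _ fun x => setIntegral_nonneg measurableSet_ball
            fun y _ => mul_nonneg (sq_nonneg _) (Real.sqrt_nonneg _)
        · exact hQint.const_mul CL
        · exact ae_of_all _ halmost
    _ = CL * ∫ x, Q x := integral_const_mul _ _
    _ = CL * ((∫ w, g w) * c) := by rw [key]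
    _ = CL * c * ∫ x, κ x * ‖G x‖^2 := by rw [hgeq]; ring
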